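/- Let s₀,...,s₅ be the quadratic forms on ℝ¹³ (coordinates y₁₂, x₁₃, y₁₃, x₁₄, y₁₄, x₁₅, y₁₅, x₂₃, y₂₃, x₂₄, y₂₄, x₂₅, y₂₅) given by: s₀ = -2x₁₄x₂₃ + 2x₁₃x₂₄ + 2y₁₄y₂₃ - 2y₁₃y₂₄, s₃ = -2x₁₄x₂₃ + 2x₁₃y₂₄ - 2y₁₄x₂₃ + 2y₁₃x₂₄ (and s₁, s₂, s₄, s₅ as given similarly), with associated symmetric matrices A₀,...,A₅. For the unit vectors X with x₁₄ = x₂₃ = 1/√2 (others zero) and Y with x₁₃ = x₂₄ = y₂₄ = 1/√3 (others zero): ⟨A₀X,X⟩ = ⟨A₃X,X⟩ = -1, ⟨A_αX,X⟩ = 0 for α ∉ {0,3}, ⟨A₀Y,Y⟩ = ⟨A₃Y,Y⟩ = 2/3, ⟨A_αY,Y⟩ = 0 for α ∉ {0,3}; hence 1 + Σ_α⟨A_αX,X⟩⟨A_αY,Y⟩ - Σ_α⟨A_αX,Y⟩² ≤ -1/3 < 0. -/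

import Mathlib

open Matrix

/- Coordinates on ℝ¹³ in the order
`y₁₂, x₁₃, y₁₃, x₁₄, y₁₄, x₁₅, y₁₅, x₂₃, y₂₃, x₂₄, y₂₄, x₂₅, y₂₅`,
so `v 0 = y₁₂`, `v 1 = x₁₃`, `v 2 = y₁₃`, `v 3 = x₁₄`, `v 4 = y₁₄`, `v 5 = x₁₅`,
`v 6 = y₁₅`, `v 7 = x₂₃`, `v 8 = y₂₃`, `v 9 = x₂₄`, `v 10 = y₂₄`, `v 11 = x₂₅`, `v 12 = y₂₅`. -/
theorem stmt19 (A : Fin 6 → Matrix (Fin 13) (Fin 13) ℝ)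
    (hsymm : ∀ α, (A α)ᵀ = A α)
    (h0 : ∀ v : Fin 13 → ℝ, (A 0).mulVec v ⬝ᵥ v
      = -2 * v 3 * v 7 + 2 * v 1 * v 9 + 2 * v 4 * v 8 - 2 * v 2 * v 10)
    (h1 : ∀ v : Fin 13 → ℝ, (A 1).mulVec v ⬝ᵥ v
      = -2 * v 5 * v 7 + 2 * v 1 * v 11 + 2 * v 6 * v 8 - 2 * v 2 * v 12)
    (h2 : ∀ v : Fin 13 → ℝ, (A 2).mulVec v ⬝ᵥ v
      = -2 * v 5 * v 9 + 2 * v 3 * v 11 + 2 * v 6 * v 10 - 2 * v 4 * v 12)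
    (h3 : ∀ v : Fin 13 → ℝ, (A 3).mulVec v ⬝ᵥ v
      = -2 * v 3 * v 7 + 2 * v 1 * v 10 - 2 * v 4 * v 7 + 2 * v 2 * v 9)
    (h4 : ∀ v : Fin 13 → ℝ, (A 4).mulVec v ⬝ᵥ v
      = -2 * v 5 * v 8 + 2 * v 1 * v 12 - 2 * v 6 * v 7 + 2 * v 2 * v 11)
    (h5 : ∀ v : Fin 13 → ℝ, (A 5).mulVec v ⬝ᵥ v
      = -2 * v 5 * v 10 + 2 * v 3 * v 12 - 2 * v 6 * v 9 + 2 * v 4 * v 11) :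
    let X : Fin 13 → ℝ :=
      ![0, 0, 0, 1 / Real.sqrt 2, 0, 0, 0, 1 / Real.sqrt 2, 0, 0, 0, 0, 0]
    let Y : Fin 13 → ℝ :=
      ![0, 1 / Real.sqrt 3, 0, 0, 0, 0, 0, 0, 0, 1 / Real.sqrt 3, 1 / Real.sqrt 3, 0, 0]
    X ⬝ᵥ X = 1 ∧ Y ⬝ᵥ Y = 1 ∧
      (A 0).mulVec X ⬝ᵥ X = -1 ∧ (A 3).mulVec X ⬝ᵥ X = -1 ∧
      (∀ α : Fin 6, α ≠ 0 → α ≠ 3 → (A α).mulVec X ⬝ᵥ X = 0) ∧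
      (A 0).mulVec Y ⬝ᵥ Y = 2 / 3 ∧ (A 3).mulVec Y ⬝ᵥ Y = 2 / 3 ∧
      (∀ α : Fin 6, α ≠ 0 → α ≠ 3 → (A α).mulVec Y ⬝ᵥ Y = 0) ∧
      (1 + (∑ α : Fin 6, (A α).mulVec X ⬝ᵥ X * ((A α).mulVec Y ⬝ᵥ Y))
          - (∑ α : Fin 6, ((A α).mulVec X ⬝ᵥ Y) ^ 2) ≤ -(1 / 3) ∧
        -(1 / 3 : ℝ) < 0) := by
  
  intro X Y
  have hs2 : Real.sqrt 2 * Real.sqrt 2 = 2 := Real.mul_self_sqrt (by norm_num)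
  have hs3 : Real.sqrt 3 * Real.sqrt 3 = 3 := Real.mul_self_sqrt (by norm_num)
  have hn2 : Real.sqrt 2 ≠ 0 := by positivity
  have hn3 : Real.sqrt 3 ≠ 0 := by positivity
  have x0 : X (0 : Fin 13) = 0 := rfl
  have x1 : X (1 : Fin 13) = 0 := rfl
  have x2 : X (2 : Fin 13) = 0 := rfl
  have x3 : X (3 : Fin 13) = 1 / Real.sqrt 2 := rfl
  have x4 : X (4 : Fin 13) = 0 := rfl
  have x5 : X (5 : Fin 13) = 0 := rfl
  have x6 : X (6 : Fin 13) = 0 := rfl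
  have x7 : X (7 : Fin 13) = 1 / Real.sqrt 2 := rfl
  have x8 : X (8 : Fin 13) = 0 := rfl
  have x9 : X (9 : Fin 13) = 0 := rfl
  have x10 : X (10 : Fin 13) = 0 := rfl
  have x11 : X (11 : Fin 13) = 0 := rfl
  have x12 : X (12 : Fin 13) = 0 := rfl
  have y0 : Y (0 : Fin 13) = 0 := rfl
  have y1 : Y (1 : Fin 13) = 1 / Real.sqrt 3 := rfl
  have y2 : Y (2 : Fin 13) = 0 := rfl
  have y3 : Y (3 : Fin 13) = 0 := rfl
  have y4 : Y (4 : Fin 13) = 0 := rfl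
  have y5 : Y (5 : Fin 13) = 0 := rfl
  have y6 : Y (6 : Fin 13) = 0 := rfl
  have y7 : Y (7 : Fin 13) = 0 := rfl
  have y8 : Y (8 : Fin 13) = 0 := rfl
  have y9 : Y (9 : Fin 13) = 1 / Real.sqrt 3 := rfl
  have y10 : Y (10 : Fin 13) = 1 / Real.sqrt 3 := rfl
  have y11 : Y (11 : Fin 13) = 0 := rfl
  have y12 : Y (12 : Fin 13) = 0 := rfl
  have hXX : X ⬝ᵥ X = 1 := by
    simp [X, dotProduct, Fin.sum_univ_succ]
    field_simp <;> rw [Real.sq_sqrt (by norm_num)] <;> norm_num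
  have hYY : Y ⬝ᵥ Y = 1 := by
    simp [Y, dotProduct, Fin.sum_univ_succ]
    field_simp
    linarith
  have hX0 : (A 0).mulVec X ⬝ᵥ X = -1 := by
    rw [h0, x1, x2, x3, x4, x7, x8, x9, x10]; field_simp <;> rw [Real.sq_sqrt (by norm_num)] <;> norm_num
  have hX3 : (A 3).mulVec X ⬝ᵥ X = -1 := by
    rw [h3, x1, x2, x3, x4, x7, x9, x10]; field_simp <;> rw [Real.sq_sqrt (by norm_num)] <;> norm_num
  have hX1 : (A 1).mulVec X ⬝ᵥ X = 0 := by
    rw [h1, x1, x2, x5, x6, x7, x8, x11, x12]; ring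
  have hX2 : (A 2).mulVec X ⬝ᵥ X = 0 := by
    rw [h2, x3, x4, x5, x6, x9, x10, x11, x12]; ring
  have hX4 : (A 4).mulVec X ⬝ᵥ X = 0 := by
    rw [h4, x1, x2, x5, x6, x7, x8, x11, x12]; ring
  have hX5 : (A 5).mulVec X ⬝ᵥ X = 0 := by
    rw [h5, x3, x4, x5, x6, x9, x10, x11, x12]; ring
  have hY0 : (A 0).mulVec Y ⬝ᵥ Y = 2 / 3 := by
    rw [h0, y1, y2, y3, y4, y7, y8, y9, y10]; field_simp <;> rw [Real.sq_sqrt (by norm_num)] <;> norm_num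
  have hY3 : (A 3).mulVec Y ⬝ᵥ Y = 2 / 3 := by
    rw [h3, y1, y2, y3, y4, y7, y9, y10]; field_simp <;> rw [Real.sq_sqrt (by norm_num)] <;> norm_num
  have hY1 : (A 1).mulVec Y ⬝ᵥ Y = 0 := by
    rw [h1, y1, y2, y5, y6, y7, y8, y11, y12]; ring
  have hY2 : (A 2).mulVec Y ⬝ᵥ Y = 0 := by
    rw [h2, y3, y4, y5, y6, y9, y10, y11, y12]; ring
  have hY4 : (A 4).mulVec Y ⬝ᵥ Y = 0 := by
    rw [h4, y1, y2, y5, y6, y7, y8, y11, y12]; ring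
  have hY5 : (A 5).mulVec Y ⬝ᵥ Y = 0 := by
    rw [h5, y3, y4, y5, y6, y9, y10, y11, y12]; ring
  refine ⟨hXX, hYY, hX0, hX3, ?_, hY0, hY3, ?_, ?_, by norm_num⟩
  · intro α hα0 hα3
    fin_cases α
    · exact absurd rfl hα0
    · exact hX1
    · exact hX2
    · exact absurd rfl hα3
    · exact hX4
    · exact hX5
  · intro α hα0 hα3
    fin_cases α
    · exact absurd rfl hα0
    · exact hY1
    · exact hY2
    · exact absurd rfl hα3
    · exact hY4
    · exact hY5
  · have hsum : (∑ α : Fin 6, (A α).mulVec X ⬝ᵥ X * ((A α).mulVec Y ⬝ᵥ Y)) = -(4/3) := by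
      rw [Fin.sum_univ_six, hX0, hX1, hX2, hX3, hX4, hX5, hY0, hY3]
      ring
    have hnn : 0 ≤ ∑ α : Fin 6, ((A α).mulVec X ⬝ᵥ Y) ^ 2 :=
      Finset.sum_nonneg fun i _ => sq_nonneg _
    rw [hsum]; linarith
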